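/- Let E₂ : y² = x³ + a₂x² + a₄x with a₄ ≠ 0, a curve with torsion point P = (0,0) of order 2 over ℚ. Then the numerator G_n of the x-coordinate of [n]P satisfies G_n = 0 if n is odd and G_n = a₄^{n²/2} if n is even. -/

import Mathlib

open Polynomial

/-- The curve `E₂ : y² = x³ + a₂x² + a₄x`. -/
def E2 (a₂ a₄ : ℚ) : WeierstrassCurve.Affine ℚ :=
  { a₁ := 0, a₂ := a₂, a₃ := 0, a₄ := a₄, a₆ := 0 }

namespace Stmt13Aux

lemma mul_step (a : ℚ) (i j p q : ℕ) :
    ((-1:ℚ)^i * a^p) * ((-1:ℚ)^j * a^q)^3 = (-1:ℚ)^(i+3*j) * a^(p+3*q) := by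
  rw [mul_pow, ← pow_mul, ← pow_mul, pow_add, pow_add]; ring

lemma preA (a : ℚ) : ∀ k : ℕ,
    preNormEDS' (0:ℚ) (-(a^2)) (-(2*a^3)) (2*k+1) = (-1:ℚ)^k * a^(k*(k+1)) := by
  intro k
  induction k using Nat.strong_induction_on with
  | _ k ih =>
    match k with
    | 0 => norm_num
    | 1 => norm_num
    | (m+2) =>
      rw [preNormEDS'_odd]
      rcases Nat.even_or_odd m with ⟨j, rfl⟩ | ⟨j, rfl⟩
      · rw [if_pos ⟨j, rfl⟩, if_pos ⟨j, rfl⟩, mul_zero, zero_sub, mul_one,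
          show j+j+1 = 2*j+1 from by ring, show j+j+3 = 2*(j+1)+1 from by ring,
          ih j (by omega), ih (j+1) (by omega), mul_step,
          Odd.neg_one_pow ⟨2*j+1, by ring⟩,
          Even.neg_one_pow (⟨j+1, by ring⟩ : Even (j+j+2)),
          show j*(j+1)+3*((j+1)*(j+1+1)) = (j+j+2)*(j+j+2+1) from by ring]
        rw [show (j+j+2)*(j+j+2+1) = (j+j+2)*(2*(j+1)+1) from by ring]
        ring
      · rw [if_neg (by simp [Nat.even_add_one, parity_simps]),
          if_neg (by simp [Nat.even_add_one, parity_simps]), mul_zero, sub_zero, mul_one,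
          show 2*j+1+4 = 2*(j+2)+1 from by ring, show 2*j+1+2 = 2*(j+1)+1 from by ring,
          ih (j+2) (by omega), ih (j+1) (by omega), mul_step,
          Odd.neg_one_pow (⟨2*j+2, by ring⟩ : Odd (j+2+3*(j+1))),
          Odd.neg_one_pow (⟨j+1, by ring⟩ : Odd (2*(j+1)+1)),
          show (j+2)*(j+2+1)+3*((j+1)*(j+1+1)) = (2*(j+1)+1)*(2*(j+1)+1+1) from by ring]

lemma S_even {a : ℚ} {n : ℤ} (hn : Even n) :
    normEDS (0:ℚ) (-(a^2)) (-(2*a^3)) n = 0 := by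
  rw [normEDS, if_pos hn, mul_zero]

lemma S_odd (a : ℚ) (k : ℕ) :
    normEDS (0:ℚ) (-(a^2)) (-(2*a^3)) (2*(k:ℤ)+1) = (-1:ℚ)^k * a^(k*(k+1)) := by
  have : (2*(k:ℤ)+1) = ((2*k+1 : ℕ) : ℤ) := by push_cast; ring
  rw [this, normEDS_ofNat, if_neg (by simp [Nat.even_add_one, parity_simps]), mul_one,
    zero_pow (by norm_num), preA]

lemma eval_ψ (a₂ a₄ : ℚ) (n : ℤ) :
    evalEval 0 0 ((E2 a₂ a₄).ψ n) = normEDS (0:ℚ) (-(a₄^2)) (-(2*a₄^3)) n := by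
  have hmap := map_normEDS (b := (E2 a₂ a₄).ψ₂) (c := C (E2 a₂ a₄).Ψ₃) (d := C (E2 a₂ a₄).preΨ₄)
    (f := evalEvalRingHom (0:ℚ) 0) n
  rw [WeierstrassCurve.ψ]
  rw [show (evalEvalRingHom (0:ℚ) 0) ((E2 a₂ a₄).ψ₂) = 0 from by
      simp [WeierstrassCurve.ψ₂, WeierstrassCurve.Affine.polynomialY, E2],
    show (evalEvalRingHom (0:ℚ) 0) (C (E2 a₂ a₄).Ψ₃) = -(a₄^2) from by
      simp [evalEval_C, WeierstrassCurve.Ψ₃, WeierstrassCurve.b₂, WeierstrassCurve.b₄,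
        WeierstrassCurve.b₆, WeierstrassCurve.b₈, E2]; try ring,
    show (evalEvalRingHom (0:ℚ) 0) (C (E2 a₂ a₄).preΨ₄) = -(2*a₄^3) from by
      simp [evalEval_C, WeierstrassCurve.preΨ₄, WeierstrassCurve.b₂, WeierstrassCurve.b₄,
        WeierstrassCurve.b₆, WeierstrassCurve.b₈, E2]; try ring] at hmap
  exact hmap

lemma eval_φ (a₂ a₄ : ℚ) (n : ℤ) :
    evalEval 0 0 ((E2 a₂ a₄).φ n) =
      -(normEDS (0:ℚ) (-(a₄^2)) (-(2*a₄^3)) (n+1) *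
        normEDS (0:ℚ) (-(a₄^2)) (-(2*a₄^3)) (n-1)) := by
  have hrfl : evalEval (0:ℚ) 0 ((E2 a₂ a₄).φ n) = (evalEvalRingHom (0:ℚ) 0) ((E2 a₂ a₄).φ n) :=
    rfl
  rw [hrfl, WeierstrassCurve.φ, map_sub, map_mul, map_mul, map_pow, coe_evalEvalRingHom,
    show evalEval (0:ℚ) 0 (C X) = 0 from by simp [evalEval_C],
    eval_ψ, eval_ψ, eval_ψ]
  ring

end Stmt13Aux

theorem stmt_13 (a₂ a₄ : ℚ) (ha : a₄ ≠ 0) (h : (E2 a₂ a₄).Nonsingular 0 0)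
    (horder : addOrderOf (WeierstrassCurve.Affine.Point.some _ _ h) = 2) (n : ℕ) :
    (Odd n → evalEval 0 0 ((E2 a₂ a₄).φ (n : ℤ)) = 0) ∧
    (Even n → evalEval 0 0 ((E2 a₂ a₄).φ (n : ℤ)) = a₄ ^ (n ^ 2 / 2)) := by
  constructor
  · rintro ⟨k, rfl⟩
    rw [Stmt13Aux.eval_φ, Stmt13Aux.S_even (⟨k+1, by push_cast; ring⟩ : Even ((2*k+1 : ℕ) + 1 : ℤ)), zero_mul, neg_zero]
  · rintro ⟨k, rfl⟩
    rcases k with _ | j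
    · simp
    · rw [Stmt13Aux.eval_φ,
        show ((j+1+(j+1) : ℕ) : ℤ) + 1 = 2*((j+1 : ℕ) : ℤ)+1 from by push_cast; ring,
        show ((j+1+(j+1) : ℕ) : ℤ) - 1 = 2*((j : ℕ) : ℤ)+1 from by push_cast; ring,
        Stmt13Aux.S_odd, Stmt13Aux.S_odd]
      have hexp : (j+1+(j+1))^2/2 = (j+1)*(j+1+1) + j*(j+1) := by
        have : (j+1+(j+1))^2 = 2*((j+1)*(j+1+1) + j*(j+1)) := by ring
        rw [this, Nat.mul_div_cancel_left _ two_pos]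
      rw [hexp]
      have hsgn : ((-1:ℚ))^(j+1) * ((-1:ℚ))^j = -1 := by
        rw [← pow_add]; exact Odd.neg_one_pow ⟨j, by ring⟩
      calc -((-1:ℚ)^(j+1) * a₄^((j+1)*(j+1+1)) * ((-1:ℚ)^j * a₄^(j*(j+1))))
          = -(((-1:ℚ)^(j+1) * (-1:ℚ)^j) * (a₄^((j+1)*(j+1+1)) * a₄^(j*(j+1)))) := by ring
        _ = a₄^((j+1)*(j+1+1)) * a₄^(j*(j+1)) := by rw [hsgn]; ring
        _ = a₄^((j+1)*(j+1+1) + j*(j+1)) := by rw [pow_add]
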